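/- Let μ ∈ ℝ^d, let Σ be a d×d real symmetric positive definite matrix, let U be a real d×n matrix, c ∈ ℝ^d, and x ∈ ℝⁿ with Ux ≠ 0. Define z(δ) = μᵀ(δ·Ux + c) / √(1 + (π/8)·(δ·Ux + c)ᵀ Σ (δ·Ux + c)). Then the limit of σ(|z(δ)|) as δ → ∞ exists and satisfies lim_{δ→∞} σ(|z(δ)|) ≤ σ( ‖μ‖ / √((π/8)·λ_min(Σ)) ). (Confidence bound of Theorem 2.4, last-layer approximation.) -/

import Mathlib

open Matrix Filter

/-- The logistic (sigmoid) function. -/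
noncomputable def sigmoid (t : ℝ) : ℝ := 1 / (1 + Real.exp (-t))

lemma sigmoid_mono : Monotone sigmoid := by
  intro s t h
  unfold sigmoid
  apply one_div_le_one_div_of_le (by positivity)
  exact add_le_add_right (Real.exp_le_exp.mpr (neg_le_neg h)) 1

lemma sigmoid_continuous : Continuous sigmoid := by
  unfold sigmoid
  exact Continuous.div continuous_const (by continuity) (fun t => by positivity)

lemma limit_aux (a b k q r s : ℝ) (hk : 0 < k) (hq : 0 < q) :
    Tendsto (fun δ : ℝ => (δ * a + b) / Real.sqrt (1 + k * (δ^2*q + δ*r + s)))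
      atTop (nhds (a / Real.sqrt (k * q))) := by
  have h1 : Tendsto (fun δ : ℝ => a + b / δ) atTop (nhds a) := by
    have := (tendsto_inv_atTop_zero (𝕜 := ℝ)).const_mul b
    simpa [div_eq_mul_inv] using tendsto_const_nhds.add this
  have h2 : Tendsto (fun δ : ℝ => 1/δ^2 + (k*q + k*r/δ + k*s/δ^2))
      atTop (nhds (k * q)) := by
    have hi : Tendsto (fun δ : ℝ => 1/δ^2) atTop (nhds 0) := by
      simpa [one_div] using ((tendsto_inv_atTop_zero (𝕜 := ℝ)).pow 2)
    have hr : Tendsto (fun δ : ℝ => k*r/δ) atTop (nhds 0) := by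
      have := (tendsto_inv_atTop_zero (𝕜 := ℝ)).const_mul (k*r)
      simpa [div_eq_mul_inv] using this
    have hs : Tendsto (fun δ : ℝ => k*s/δ^2) atTop (nhds 0) := by
      have := ((tendsto_inv_atTop_zero (𝕜 := ℝ)).pow 2).const_mul (k*s)
      simpa [div_eq_mul_inv] using this
    have := hi.add ((tendsto_const_nhds (x := k*q)).add hr |>.add hs)
    simpa using this
  have h3 : Tendsto (fun δ : ℝ => Real.sqrt (1/δ^2 + (k*q + k*r/δ + k*s/δ^2)))
      atTop (nhds (Real.sqrt (k * q))) :=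
    (Real.continuous_sqrt.tendsto _).comp h2
  have hsq : Real.sqrt (k*q) ≠ 0 := ne_of_gt (Real.sqrt_pos.mpr (by positivity))
  have := h1.div h3 hsq
  apply this.congr'
  filter_upwards [eventually_gt_atTop 0] with δ hδ
  have hδ' : δ ≠ 0 := ne_of_gt hδ
  have hbig : Real.sqrt (1 + k * (δ^2*q + δ*r + s))
      = δ * Real.sqrt (1/δ^2 + (k*q + k*r/δ + k*s/δ^2)) := by
    have h' : δ * Real.sqrt (1/δ^2 + (k*q + k*r/δ + k*s/δ^2))
        = Real.sqrt (δ^2 * (1/δ^2 + (k*q + k*r/δ + k*s/δ^2))) := by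
      rw [Real.sqrt_mul (sq_nonneg δ), Real.sqrt_sq hδ.le]
    rw [h']
    congr 1
    field_simp
  rw [hbig, ← div_div, add_div, mul_div_cancel_left₀ _ hδ']
  rfl

lemma quad_lower {d : ℕ} [Nonempty (Fin d)] {S : Matrix (Fin d) (Fin d) ℝ}
    (hS : S.PosDef) (v : Fin d → ℝ) :
    (⨅ i, hS.1.eigenvalues i) * (v ⬝ᵥ v) ≤ v ⬝ᵥ (S *ᵥ v) := by
  set V : Matrix (Fin d) (Fin d) ℝ := (hS.1.eigenvectorUnitary : Matrix (Fin d) (Fin d) ℝ) with hV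
  have hVmem := hS.1.eigenvectorUnitary.2
  have hVV : V * star V = 1 := (Matrix.mem_unitaryGroup_iff).mp hVmem
  set w : Fin d → ℝ := star V *ᵥ v with hw
  have hwv : v ᵥ* V = w := by
    rw [hw, ← mulVec_transpose]
    congr 1
  have h1 : v ⬝ᵥ (S *ᵥ v) = ∑ i, hS.1.eigenvalues i * (w i * w i) := by
    conv_lhs => rw [hS.1.spectral_theorem, Unitary.conjStarAlgAut_apply]
    rw [← mulVec_mulVec, ← mulVec_mulVec, dotProduct_mulVec, hwv]
    simp [dotProduct, mulVec_diagonal]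
    ring_nf
    congr 1; ext i; ring
  have h2 : v ⬝ᵥ v = ∑ i, w i * w i := by
    have hvw : w ᵥ* star V = v := by
      rw [← mulVec_transpose]
      have ht : (star V)ᵀ = V := by
        rw [Matrix.star_eq_conjTranspose]
        ext i j; simp [Matrix.conjTranspose_apply]
      rw [ht, hw, mulVec_mulVec, hVV, one_mulVec]
    have : w ⬝ᵥ w = v ⬝ᵥ v := by
      nth_rewrite 2 [hw]
      rw [dotProduct_mulVec, hvw]
    rw [← this]; rfl
  rw [h1, h2, Finset.mul_sum]
  apply Finset.sum_le_sum
  intro i _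
  have hnn : 0 ≤ w i * w i := mul_self_nonneg _
  exact mul_le_mul_of_nonneg_right (ciInf_le (Set.Finite.bddBelow (Set.finite_range _)) i) hnn
/-- Confidence bound of Theorem 2.4 (last-layer approximation): the limit of
`σ(|z(δ)|)` as `δ → ∞` exists and is at most
`σ(‖μ‖ / √((π/8)·λ_min(Σ)))`. -/
theorem sigmoid_abs_softened_logit_tendsto_le_lastLayer {d n : ℕ}
    (μ c : Fin d → ℝ) (S : Matrix (Fin d) (Fin d) ℝ) (hS : S.PosDef)
    (U : Matrix (Fin d) (Fin n) ℝ) (x : Fin n → ℝ) (hUx : U *ᵥ x ≠ 0) :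
    ∃ L : ℝ,
      Tendsto
        (fun δ : ℝ =>
          sigmoid |(μ ⬝ᵥ (δ • (U *ᵥ x) + c)) /
            Real.sqrt (1 + Real.pi / 8 *
              ((δ • (U *ᵥ x) + c) ⬝ᵥ (S *ᵥ (δ • (U *ᵥ x) + c))))|)
        atTop (nhds L) ∧
      L ≤ sigmoid (Real.sqrt (μ ⬝ᵥ μ) /
        Real.sqrt (Real.pi / 8 * ⨅ i, hS.1.eigenvalues i)) := by
  haveI hne : Nonempty (Fin d) := by
    rcases Nat.eq_zero_or_pos d with h | h
    · exfalso; apply hUx; subst h; ext i; exact absurd i.2 (by omega)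
    · exact ⟨⟨0, h⟩⟩
  set v : Fin d → ℝ := U *ᵥ x with hv
  set a : ℝ := μ ⬝ᵥ v
  set b : ℝ := μ ⬝ᵥ c
  set k : ℝ := Real.pi / 8 with hk
  set q : ℝ := v ⬝ᵥ (S *ᵥ v) with hqdef
  set r : ℝ := v ⬝ᵥ (S *ᵥ c) + c ⬝ᵥ (S *ᵥ v)
  set s : ℝ := c ⬝ᵥ (S *ᵥ c)
  have hkpos : 0 < k := by rw [hk]; positivity
  have hq : 0 < q := by
    have := hS.dotProduct_mulVec_pos hUx
    simpa using this
  have hnum : ∀ δ : ℝ, μ ⬝ᵥ (δ • v + c) = δ * a + b := by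
    intro δ
    simp [dotProduct_add, dotProduct_smul, smul_eq_mul, a, b]
  have hquad : ∀ δ : ℝ, (δ • v + c) ⬝ᵥ (S *ᵥ (δ • v + c)) = δ^2*q + δ*r + s := by
    intro δ
    simp only [mulVec_add, mulVec_smul, dotProduct_add, dotProduct_smul,
      add_dotProduct, smul_dotProduct, smul_eq_mul, q, r, s]
    ring
  have hlim := limit_aux a b k q r s hkpos hq
  have hcont : Continuous fun t : ℝ => sigmoid |t| :=
    sigmoid_continuous.comp continuous_abs
  refine ⟨sigmoid |a / Real.sqrt (k * q)|, ?_, ?_⟩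
  · have := (hcont.tendsto _).comp hlim
    apply this.congr
    intro δ
    simp only [Function.comp_apply, hnum δ, hquad δ]
  · apply sigmoid_mono
    rw [abs_div, abs_of_nonneg (Real.sqrt_nonneg _)]
    have hvv : 0 < v ⬝ᵥ v := by
      have := Matrix.dotProduct_self_star_pos_iff.mpr hUx
      simpa using this
    set lam : ℝ := ⨅ i, hS.1.eigenvalues i with hlam
    have hlampos : 0 < lam := by
      obtain ⟨i, hi⟩ := Finite.exists_min hS.1.eigenvalues
      exact lt_of_lt_of_le (hS.eigenvalues_pos i) (le_ciInf hi)
    have hμμ : 0 ≤ μ ⬝ᵥ μ := by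
      have := dotProduct_self_star_nonneg μ; simpa using this
    have hCS : |a| ≤ Real.sqrt (μ ⬝ᵥ μ) * Real.sqrt (v ⬝ᵥ v) := by
      rw [← Real.sqrt_mul hμμ, ← Real.sqrt_sq_eq_abs]
      apply Real.sqrt_le_sqrt
      have := Finset.sum_mul_sq_le_sq_mul_sq Finset.univ μ v
      calc a^2 = (∑ i, μ i * v i)^2 := rfl
        _ ≤ (∑ i, μ i ^2) * ∑ i, v i^2 := this
        _ = (μ ⬝ᵥ μ) * (v ⬝ᵥ v) := by simp [dotProduct, sq]
    have hQ : Real.sqrt (k * lam) * Real.sqrt (v ⬝ᵥ v) ≤ Real.sqrt (k * q) := by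
      rw [← Real.sqrt_mul (by positivity)]
      apply Real.sqrt_le_sqrt
      calc k * lam * (v ⬝ᵥ v) = k * (lam * (v ⬝ᵥ v)) := by ring
        _ ≤ k * q := by
            apply mul_le_mul_of_nonneg_left _ hkpos.le
            exact quad_lower hS v
    have hd : 0 < Real.sqrt (k * lam) * Real.sqrt (v ⬝ᵥ v) := by positivity
    calc |a| / Real.sqrt (k * q)
        ≤ (Real.sqrt (μ ⬝ᵥ μ) * Real.sqrt (v ⬝ᵥ v)) /
          (Real.sqrt (k * lam) * Real.sqrt (v ⬝ᵥ v)) :=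
          div_le_div₀ (by positivity) hCS hd hQ
      _ = Real.sqrt (μ ⬝ᵥ μ) / Real.sqrt (k * lam) := by
          rw [mul_div_mul_right _ _ (by positivity : Real.sqrt (v ⬝ᵥ v) ≠ 0)]
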